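/- Let n_1, …, n_N be unit vectors in Euclidean space ℝ^d, let c ≥ 0, and assume ⟨n_i, n_j⟩ ≥ c for all i ≠ j. Let P_i = {x ∈ ℝ^d : |⟨x, n_i⟩ − b_i| ≤ w_i/2} be planks of widths w_i > 0, and let k be a positive integer such that every point of the closed Euclidean unit ball B is contained in at least k of the planks P_i. Then Σ_{i=1}^{N} w_i ≥ 2 √( (c(k − 1) + 1) k ). -/

import Mathlib

open RealInnerProductSpace

private lemma walk_bound
    (d N : ℕ) (n : Fin N → EuclideanSpace ℝ (Fin d)) (hn : ∀ i, ‖n i‖ = 1)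
    (c : ℝ) (hc : 0 ≤ c) (hpar : ∀ i j, i ≠ j → c ≤ (inner ℝ (n i) (n j) : ℝ))
    (b w : Fin N → ℝ) (k : ℕ) (hk : 0 < k)
    (hcover : ∀ x ∈ Metric.closedBall (0 : EuclideanSpace ℝ (Fin d)) 1,
      k ≤ (Finset.univ.filter fun i => |(inner ℝ x (n i) : ℝ) - b i| ≤ w i / 2).card)
    (h : ℝ) (hh : 0 < h) :
    Real.sqrt ((c * ((k : ℝ) - 1) + 1) * (k : ℝ))
      ≤ ∑ i, max 0 ((b i + w i / 2) + h - max (b i - w i / 2) 0) := by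
  classical
  set ρ : ℝ := Real.sqrt ((c * ((k : ℝ) - 1) + 1) * (k : ℝ)) with hρ
  have hk1 : (1:ℝ) ≤ (k:ℝ) := by exact_mod_cast hk
  have hρ1 : 1 ≤ ρ := by
    have h1 : (1:ℝ) ≤ (c * ((k : ℝ) - 1) + 1) * (k : ℝ) := by
      nlinarith [mul_nonneg hc (sub_nonneg.mpr hk1)]
    calc (1:ℝ) = Real.sqrt 1 := Real.sqrt_one.symm
    _ ≤ ρ := by rw [hρ]; exact Real.sqrt_le_sqrt h1
  have hρ0 : 0 ≤ ρ := le_trans zero_le_one hρ1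
  -- selection of k covering planks
  have hselex : ∀ x : EuclideanSpace ℝ (Fin d), ∃ I : Finset (Fin N),
      ‖x‖ ≤ 1 → (I.card = k ∧ ∀ i ∈ I, |⟪x, n i⟫ - b i| ≤ w i / 2) := by
    intro x
    by_cases hx : ‖x‖ ≤ 1
    · have hxb : x ∈ Metric.closedBall (0 : EuclideanSpace ℝ (Fin d)) 1 := by
        rwa [mem_closedBall_zero_iff]
      obtain ⟨I, hIs, hIc⟩ := Finset.exists_subset_card_eq (hcover x hxb)
      exact ⟨I, fun _ => ⟨hIc, fun i hi => (Finset.mem_filter.1 (hIs hi)).2⟩⟩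
    · exact ⟨∅, fun hx' => absurd hx' hx⟩
  choose Sel hSel using hselex
  set V : Finset (Fin N) → EuclideanSpace ℝ (Fin d) := fun I => ∑ i ∈ I, n i with hV
  have hdiag : ∀ i, ⟪n i, n i⟫ = 1 := by
    intro i; rw [real_inner_self_eq_norm_sq, hn i]; norm_num
  have hVnn : ∀ (I : Finset (Fin N)) (j : Fin N), 0 ≤ ⟪V I, n j⟫ := by
    intro I j
    rw [hV, sum_inner]
    refine Finset.sum_nonneg fun i _ => ?_
    rcases eq_or_ne i j with rfl | hij
    · rw [hdiag]; norm_num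
    · exact le_trans hc (hpar i j hij)
  have hVle : ∀ I : Finset (Fin N), ‖V I‖ ≤ (I.card : ℝ) := by
    intro I
    calc ‖V I‖ ≤ ∑ i ∈ I, ‖n i‖ := norm_sum_le _ _
    _ = (I.card : ℝ) := by simp [hn]
  have hVlb : ∀ I : Finset (Fin N), I.card = k → ρ ≤ ‖V I‖ := by
    intro I hI
    have hsq : ⟪V I, V I⟫ = ∑ i ∈ I, ∑ j ∈ I, ⟪n i, n j⟫ := by
      rw [hV, sum_inner]
      exact Finset.sum_congr rfl fun i _ => inner_sum _ _ _
    have hge : (c * ((k : ℝ) - 1) + 1) * (k:ℝ) ≤ ‖V I‖ ^ 2 := by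
      rw [← real_inner_self_eq_norm_sq, hsq]
      have hrow : ∀ i ∈ I, (1 + ((k:ℝ) - 1) * c) ≤ ∑ j ∈ I, ⟪n i, n j⟫ := by
        intro i hi
        rw [← Finset.add_sum_erase _ _ hi, hdiag]
        have hcard : ((I.erase i).card : ℝ) = (k:ℝ) - 1 := by
          rw [Finset.card_erase_of_mem hi, hI]
          push_cast [Nat.cast_sub (Nat.one_le_iff_ne_zero.mpr (Nat.pos_iff_ne_zero.mp hk))]
          ring
        have h2 := Finset.card_nsmul_le_sum (I.erase i) (fun j => ⟪n i, n j⟫) c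
          (fun j hj => hpar i j (fun hij => (Finset.ne_of_mem_erase hj) hij.symm))
        rw [nsmul_eq_mul, hcard] at h2
        linarith
      calc (c * ((k : ℝ) - 1) + 1) * (k:ℝ) = ∑ _i ∈ I, (1 + ((k:ℝ) - 1) * c) := by
            rw [Finset.sum_const, hI, nsmul_eq_mul]; ring
      _ ≤ ∑ i ∈ I, ∑ j ∈ I, ⟪n i, n j⟫ := Finset.sum_le_sum hrow
    calc ρ ≤ Real.sqrt (‖V I‖ ^ 2) := Real.sqrt_le_sqrt hge
    _ = ‖V I‖ := Real.sqrt_sq (norm_nonneg _)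
  have hVuniv : (k:ℝ) ≤ ⟪V (Sel 0), V Finset.univ⟫ → True := fun _ => trivial
  -- the walk
  set step : EuclideanSpace ℝ (Fin d) → EuclideanSpace ℝ (Fin d) :=
    fun x => x + (h / ‖V (Sel x)‖) • V (Sel x) with hstep
  set z : ℕ → EuclideanSpace ℝ (Fin d) := fun j => step^[j] 0 with hz
  have hz0 : z 0 = 0 := rfl
  have hzs : ∀ j, z (j+1) = step (z j) := fun j => Function.iterate_succ_apply' step j 0
  have hincr : ∀ (x : EuclideanSpace ℝ (Fin d)) (y : EuclideanSpace ℝ (Fin d)),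
      ⟪step x, y⟫ - ⟪x, y⟫ = (h / ‖V (Sel x)‖) * ⟪V (Sel x), y⟫ := by
    intro x y
    have : ⟪x + (h / ‖V (Sel x)‖) • V (Sel x), y⟫ - ⟪x, y⟫
        = (h / ‖V (Sel x)‖) * ⟪V (Sel x), y⟫ := by
      rw [inner_add_left, real_inner_smul_left]; ring
    exact this
  have hincr_nn : ∀ (x : EuclideanSpace ℝ (Fin d)) (i : Fin N),
      0 ≤ (h / ‖V (Sel x)‖) * ⟪V (Sel x), n i⟫ :=
    fun x i => mul_nonneg (div_nonneg hh.le (norm_nonneg _)) (hVnn _ i)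
  have hmono : ∀ (i : Fin N), Monotone fun j => ⟪z j, n i⟫ := by
    intro i
    apply monotone_nat_of_le_succ
    intro j
    have := hincr (z j) (n i)
    rw [← hzs j] at this
    have h0 := hincr_nn (z j) i
    linarith
  have hincr_le : ∀ (x : EuclideanSpace ℝ (Fin d)) (i : Fin N),
      (h / ‖V (Sel x)‖) * ⟪V (Sel x), n i⟫ ≤ h := by
    intro x i
    rcases eq_or_ne (V (Sel x)) 0 with h0 | h0
    · rw [h0]; simp [hh.le]
    · have hvpos : 0 < ‖V (Sel x)‖ := norm_pos_iff.mpr h0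
      have h1 : ⟪V (Sel x), n i⟫ ≤ ‖V (Sel x)‖ := by
        calc ⟪V (Sel x), n i⟫ ≤ ‖V (Sel x)‖ * ‖n i‖ := real_inner_le_norm _ _
        _ = ‖V (Sel x)‖ := by rw [hn i, mul_one]
      calc (h / ‖V (Sel x)‖) * ⟪V (Sel x), n i⟫
          ≤ (h / ‖V (Sel x)‖) * ‖V (Sel x)‖ :=
            mul_le_mul_of_nonneg_left h1 (div_nonneg hh.le hvpos.le)
      _ = h := div_mul_cancel₀ _ (ne_of_gt hvpos)
  -- termination
  have hterm : ∃ j, 1 < ‖z j‖ := by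
    by_contra hcon
    push_neg at hcon
    have hφ : ∀ j : ℕ, (j : ℝ) * h ≤ ⟪z j, V Finset.univ⟫ := by
      intro j
      induction j with
      | zero => simp [hz0]
      | succ j ih =>
        have hvalid := hSel (z j) (hcon j)
        have hvlb := hVlb (Sel (z j)) hvalid.1
        have hvpos : 0 < ‖V (Sel (z j))‖ := lt_of_lt_of_le (lt_of_lt_of_le one_pos hρ1) hvlb
        have hinnerk : (k:ℝ) ≤ ⟪V (Sel (z j)), V Finset.univ⟫ := by
          have hexp : ⟪V (Sel (z j)), V Finset.univ⟫
              = ∑ i ∈ Sel (z j), ⟪n i, V Finset.univ⟫ := sum_inner _ _ _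
          have hone : ∀ i ∈ Sel (z j), (1:ℝ) ≤ ⟪n i, V Finset.univ⟫ := by
            intro i _
            have hexp2 : ⟪n i, V Finset.univ⟫ = ∑ l ∈ Finset.univ, ⟪n i, n l⟫ :=
              inner_sum _ _ _
            rw [hexp2]
            calc (1:ℝ) = ⟪n i, n i⟫ := (hdiag i).symm
            _ ≤ ∑ l ∈ Finset.univ, ⟪n i, n l⟫ := by
                refine Finset.single_le_sum (f := fun l => ⟪n i, n l⟫)
                  (fun l _ => ?_) (Finset.mem_univ i)
                show (0:ℝ) ≤ ⟪n i, n l⟫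
                rcases eq_or_ne i l with rfl | hil
                · rw [hdiag]
                  norm_num
                · exact le_trans hc (hpar i l hil)
          have h3 := Finset.card_nsmul_le_sum (Sel (z j))
            (fun i => ⟪n i, V Finset.univ⟫) 1 hone
          rw [nsmul_eq_mul, hvalid.1, mul_one] at h3
          rw [hexp]
          exact_mod_cast h3
        have hstep1 : h ≤ ⟪z (j+1), V Finset.univ⟫ - ⟪z j, V Finset.univ⟫ := by
          rw [hzs j, hincr (z j) (V Finset.univ)]
          have hklev : ‖V (Sel (z j))‖ ≤ ⟪V (Sel (z j)), V Finset.univ⟫ := by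
            calc ‖V (Sel (z j))‖ ≤ (k:ℝ) := by
                  have := hVle (Sel (z j)); rwa [hvalid.1] at this
            _ ≤ _ := hinnerk
          calc h = (h / ‖V (Sel (z j))‖) * ‖V (Sel (z j))‖ :=
                (div_mul_cancel₀ _ (ne_of_gt hvpos)).symm
          _ ≤ (h / ‖V (Sel (z j))‖) * ⟪V (Sel (z j)), V Finset.univ⟫ :=
                mul_le_mul_of_nonneg_left hklev (div_nonneg hh.le hvpos.le)
        push_cast
        linarith
    obtain ⟨j, hj⟩ := exists_nat_gt ((N : ℝ) / h)
    have hNlt : (N:ℝ) < j * h := by rwa [div_lt_iff₀ hh] at hj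
    have hub : ⟪z j, V Finset.univ⟫ ≤ (N:ℝ) := by
      calc ⟪z j, V Finset.univ⟫ ≤ ‖z j‖ * ‖V Finset.univ‖ := real_inner_le_norm _ _
      _ ≤ 1 * (N:ℝ) := by
            apply mul_le_mul (hcon j) ?_ (norm_nonneg _) zero_le_one
            have := hVle Finset.univ
            rwa [Finset.card_univ, Fintype.card_fin] at this
      _ = (N:ℝ) := one_mul _
    linarith [hφ j]
  set m : ℕ := Nat.find hterm with hm
  have hmspec : 1 < ‖z m‖ := Nat.find_spec hterm
  have hmmin : ∀ j, j < m → ‖z j‖ ≤ 1 := fun j hj => not_lt.mp (Nat.find_min hterm hj)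
  -- path length
  have hstepnorm : ∀ x : EuclideanSpace ℝ (Fin d), ‖step x - x‖ ≤ h := by
    intro x
    rw [hstep]
    simp only [add_sub_cancel_left]
    rw [norm_smul]
    rcases eq_or_ne (V (Sel x)) 0 with h0 | h0
    · rw [h0]; simp [hh.le]
    · have hvpos : 0 < ‖V (Sel x)‖ := norm_pos_iff.mpr h0
      rw [Real.norm_eq_abs, abs_div, abs_of_nonneg hh.le, abs_of_nonneg hvpos.le,
        div_mul_cancel₀ _ (ne_of_gt hvpos)]
  have hpath : ∀ j : ℕ, ‖z j‖ ≤ (j : ℝ) * h := by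
    intro j
    induction j with
    | zero => simp [hz0]
    | succ j ih =>
      have h1 : ‖z (j+1)‖ ≤ ‖z j‖ + ‖z (j+1) - z j‖ := by
        simpa using norm_add_le (z j) (z (j+1) - z j)
      have h2 : ‖z (j+1) - z j‖ ≤ h := by rw [hzs j]; exact hstepnorm (z j)
      push_cast
      linarith
  have hmh : 1 < (m : ℝ) * h := lt_of_lt_of_le hmspec (hpath m)
  -- main count
  have hkey : ρ * ((m:ℝ) * h) ≤
      ∑ i, max 0 ((b i + w i / 2) + h - max (b i - w i / 2) 0) := by
    have hstep1 : ∀ j ∈ Finset.range m,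
        ρ * h ≤ ∑ i ∈ Sel (z j), (⟪z (j+1), n i⟫ - ⟪z j, n i⟫) := by
      intro j hj
      have hjm : j < m := Finset.mem_range.mp hj
      have hvalid := hSel (z j) (hmmin j hjm)
      have hvlb := hVlb (Sel (z j)) hvalid.1
      have hvpos : 0 < ‖V (Sel (z j))‖ := lt_of_lt_of_le (lt_of_lt_of_le one_pos hρ1) hvlb
      have hterms : ∀ i ∈ Sel (z j), ⟪z (j+1), n i⟫ - ⟪z j, n i⟫
          = (h / ‖V (Sel (z j))‖) * ⟪V (Sel (z j)), n i⟫ := by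
        intro i _
        rw [hzs j]; exact hincr (z j) (n i)
      rw [Finset.sum_congr rfl hterms, ← Finset.mul_sum]
      have hsum : ∑ i ∈ Sel (z j), ⟪V (Sel (z j)), n i⟫ = ‖V (Sel (z j))‖ ^ 2 := by
        rw [← inner_sum]
        exact real_inner_self_eq_norm_sq _
      rw [hsum]
      calc ρ * h ≤ ‖V (Sel (z j))‖ * h :=
            mul_le_mul_of_nonneg_right hvlb hh.le
      _ = (h / ‖V (Sel (z j))‖) * ‖V (Sel (z j))‖ ^ 2 := by
            field_simp
    calc ρ * ((m:ℝ) * h) = ∑ _j ∈ Finset.range m, ρ * h := by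
          rw [Finset.sum_const, Finset.card_range, nsmul_eq_mul]; ring
    _ ≤ ∑ j ∈ Finset.range m, ∑ i ∈ Sel (z j), (⟪z (j+1), n i⟫ - ⟪z j, n i⟫) :=
          Finset.sum_le_sum hstep1
    _ = ∑ j ∈ Finset.range m, ∑ i : Fin N,
          (if i ∈ Sel (z j) then ⟪z (j+1), n i⟫ - ⟪z j, n i⟫ else 0) := by
          refine Finset.sum_congr rfl fun j _ => ?_
          rw [Finset.sum_ite_mem, Finset.univ_inter]
    _ = ∑ i : Fin N, ∑ j ∈ Finset.range m,
          (if i ∈ Sel (z j) then ⟪z (j+1), n i⟫ - ⟪z j, n i⟫ else 0) :=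
          Finset.sum_comm
    _ ≤ ∑ i, max 0 ((b i + w i / 2) + h - max (b i - w i / 2) 0) := by
          refine Finset.sum_le_sum fun i _ => ?_
          set g : ℕ → ℝ := fun j => ⟪z j, n i⟫ with hg
          have hgmono : Monotone g := hmono i
          have hg0 : g 0 = 0 := by rw [hg]; simp [hz0]
          have hgstep : ∀ j, g (j+1) - g j ≤ h := by
            intro j
            have := hincr (z j) (n i)
            rw [← hzs j] at this
            rw [hg]
            rw [this]
            exact hincr_le (z j) i
          have hgnn : ∀ j, 0 ≤ g (j+1) - g j := by
            intro j
            have := hincr (z j) (n i)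
            rw [← hzs j] at this
            rw [hg, this]
            exact hincr_nn (z j) i
          set U : Finset ℕ := (Finset.range m).filter (fun j => i ∈ Sel (z j)) with hU
          have hLHS : (∑ j ∈ Finset.range m,
              if i ∈ Sel (z j) then g (j+1) - g j else 0) = ∑ j ∈ U, (g (j+1) - g j) :=
            (Finset.sum_filter _ _).symm
          rw [show (∑ j ∈ Finset.range m,
              (if i ∈ Sel (z j) then ⟪z (j+1), n i⟫ - ⟪z j, n i⟫ else 0))
              = ∑ j ∈ Finset.range m, (if i ∈ Sel (z j) then g (j+1) - g j else 0) from rfl]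
          rw [hLHS]
          by_cases hUne : U.Nonempty
          · set ja : ℕ := U.min' hUne with hja
            set jb : ℕ := U.max' hUne with hjb
            have hjab : ja ≤ jb := Finset.min'_le _ _ (U.max'_mem hUne)
            have hsub : U ⊆ Finset.Icc ja jb := fun j hj =>
              Finset.mem_Icc.mpr ⟨U.min'_le j hj, U.le_max' j hj⟩
            have h1 : ∑ j ∈ U, (g (j+1) - g j) ≤ ∑ j ∈ Finset.Icc ja jb, (g (j+1) - g j) :=
              Finset.sum_le_sum_of_subset_of_nonneg hsub (fun j _ _ => hgnn j)
            have htel : ∑ j ∈ Finset.Icc ja jb, (g (j+1) - g j) = g (jb+1) - g ja := by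
              rw [← Finset.Ico_add_one_right_eq_Icc, Finset.sum_Ico_eq_sub _ (n := jb + 1) (Nat.le_succ_of_le hjab),
                Finset.sum_range_sub (fun j => g j), Finset.sum_range_sub (fun j => g j)]
              ring
            have hjbU : jb ∈ U := U.max'_mem hUne
            have hjaU : ja ∈ U := U.min'_mem hUne
            rw [hU, Finset.mem_filter, Finset.mem_range] at hjbU hjaU
            have hvalidb := hSel (z jb) (hmmin jb hjbU.1)
            have hmemb := hvalidb.2 i hjbU.2
            have hvalida := hSel (z ja) (hmmin ja hjaU.1)
            have hmema := hvalida.2 i hjaU.2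
            have hup : g (jb+1) ≤ (b i + w i / 2) + h := by
              have h3 : g jb ≤ b i + w i / 2 := by
                have := abs_le.mp hmemb
                rw [← hg] at *
                linarith [this.2]
              linarith [hgstep jb]
            have hlo : max (b i - w i / 2) 0 ≤ g ja := by
              apply max_le
              · have := abs_le.mp hmema
                linarith [this.1]
              · rw [← hg0]; exact hgmono (Nat.zero_le ja)
            calc ∑ j ∈ U, (g (j+1) - g j) ≤ g (jb+1) - g ja := by rw [← htel]; exact h1
            _ ≤ (b i + w i / 2) + h - max (b i - w i / 2) 0 := by linarith
            _ ≤ max 0 ((b i + w i / 2) + h - max (b i - w i / 2) 0) := le_max_right _ _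
          · rw [Finset.not_nonempty_iff_eq_empty.mp hUne]
            simp only [Finset.sum_empty]
            exact le_max_left _ _
  calc ρ ≤ ρ * ((m:ℝ) * h) := le_mul_of_one_le_right hρ0 hmh.le
  _ ≤ _ := hkey

private lemma cap_pair_bound (β ω h : ℝ) (hh : 0 < h) (hω : 0 ≤ ω) :
    max 0 ((β + ω / 2) + h - max (β - ω / 2) 0)
      + max 0 ((-β + ω / 2) + h - max (-β - ω / 2) 0) ≤ ω + 2 * h := by
  rcases le_total (β - ω / 2) 0 with h1 | h1 <;>
    rcases le_total (-β - ω / 2) 0 with h2 | h2 <;>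
      simp [max_def] <;> split_ifs <;> linarith

/-- Fractional Bang-type estimate for "almost parallel" planks covering the
Euclidean unit ball: if unit normals satisfy `⟨n i, n j⟩ ≥ c ≥ 0` pairwise and every point of
the closed unit ball lies in at least `k` of the planks `P i = {x : |⟨x, n i⟩ − b i| ≤ w i /2}`,
then `Σ w i ≥ 2 √((c(k−1)+1)k)`. -/
theorem fractional_bang_almost_parallel
    (d N : ℕ) (n : Fin N → EuclideanSpace ℝ (Fin d)) (hn : ∀ i, ‖n i‖ = 1)
    (c : ℝ) (hc : 0 ≤ c) (hpar : ∀ i j, i ≠ j → c ≤ (inner ℝ (n i) (n j) : ℝ))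
    (b w : Fin N → ℝ) (hw : ∀ i, 0 < w i) (k : ℕ) (hk : 0 < k)
    (hcover : ∀ x ∈ Metric.closedBall (0 : EuclideanSpace ℝ (Fin d)) 1,
      k ≤ (Finset.univ.filter fun i => |(inner ℝ x (n i) : ℝ) - b i| ≤ w i / 2).card) :
    2 * Real.sqrt ((c * ((k : ℝ) - 1) + 1) * (k : ℝ)) ≤ ∑ i, w i := by
  classical
  set ρ : ℝ := Real.sqrt ((c * ((k : ℝ) - 1) + 1) * (k : ℝ)) with hρ
  by_contra hcon
  push_neg at hcon
  set δ : ℝ := 2 * ρ - ∑ i, w i with hδ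
  have hδpos : 0 < δ := by rw [hδ]; linarith
  set h : ℝ := δ / (2 * (N:ℝ) + 2) with hhdef
  have hNpos : (0:ℝ) < 2 * (N:ℝ) + 2 := by positivity
  have hh : 0 < h := div_pos hδpos hNpos
  -- reflected cover
  have hcover' : ∀ x ∈ Metric.closedBall (0 : EuclideanSpace ℝ (Fin d)) 1,
      k ≤ (Finset.univ.filter fun i =>
        |(inner ℝ x (n i) : ℝ) - (fun i => -b i) i| ≤ w i / 2).card := by
    intro x hx
    have hx' : -x ∈ Metric.closedBall (0 : EuclideanSpace ℝ (Fin d)) 1 := by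
      rw [mem_closedBall_zero_iff] at hx ⊢
      simpa using hx
    have hfil : (Finset.univ.filter fun i => |(inner ℝ (-x) (n i) : ℝ) - b i| ≤ w i / 2)
        = (Finset.univ.filter fun i =>
            |(inner ℝ x (n i) : ℝ) - (fun i => -b i) i| ≤ w i / 2) := by
      apply Finset.filter_congr
      intro i _
      rw [inner_neg_left]
      constructor
      · intro hab
        have : (inner ℝ x (n i) : ℝ) - -b i = -(-(inner ℝ x (n i) : ℝ) - b i) := by ring
        rw [this, abs_neg]
        exact hab
      · intro hab
        have : -(inner ℝ x (n i) : ℝ) - b i = -((inner ℝ x (n i) : ℝ) - -b i) := by ring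
        rw [this, abs_neg]
        exact hab
    rw [← hfil]
    exact hcover (-x) hx'
  have h1 := walk_bound d N n hn c hc hpar b w k hk hcover h hh
  have h2 := walk_bound d N n hn c hc hpar (fun i => -b i) w k hk hcover' h hh
  have h2' : ρ ≤ ∑ i, max 0 ((-b i + w i / 2) + h - max (-b i - w i / 2) 0) := h2
  have hsum : ∑ i, max 0 ((b i + w i / 2) + h - max (b i - w i / 2) 0)
      + ∑ i, max 0 ((-b i + w i / 2) + h - max (-b i - w i / 2) 0)
      ≤ ∑ i, (w i + 2 * h) := by
    rw [← Finset.sum_add_distrib]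
    exact Finset.sum_le_sum fun i _ => cap_pair_bound (b i) (w i) h hh (hw i).le
  have htot : ∑ i, (w i + 2 * h) = (∑ i, w i) + (N:ℝ) * (2 * h) := by
    rw [Finset.sum_add_distrib, Finset.sum_const, Finset.card_univ, Fintype.card_fin,
      nsmul_eq_mul]
  have hNh : (N:ℝ) * (2 * h) = δ - 2 * h := by
    have : (2 * (N:ℝ) + 2) * h = δ := by
      rw [hhdef]
      field_simp
    nlinarith [this]
  have : 2 * ρ ≤ (∑ i, w i) + (δ - 2 * h) := by
    calc 2 * ρ = ρ + ρ := by ring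
    _ ≤ _ + _ := add_le_add h1 h2'
    _ ≤ ∑ i, (w i + 2 * h) := hsum
    _ = (∑ i, w i) + (N:ℝ) * (2 * h) := htot
    _ = (∑ i, w i) + (δ - 2 * h) := by rw [hNh]
  rw [hδ] at this
  linarith
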